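/- Let I be an ideal of C(X) and let c ∈ X ∖ ⋂Z[I]. Set c⁺ = {f ∈ C(X) : f(c) > 0} and c⁰ = {f ∈ C(X) : f(c) ≥ 0}. Then, in C(X) with the u^I-topology: (i) c⁺ is open; (ii) c⁰ is closed; (iii) c⁰ is not open; (iv) the closure of c⁺ equals c⁰. -/
import Mathlib


open Set Topology TopologicalSpace Pointwise

/-- `⋂ Z[I] = ⋂_{g ∈ I} Z(g)`, the intersection of the zero sets of members of `I`. -/
def zInter {X : Type*} [TopologicalSpace X] (I : Ideal C(X, ℝ)) : Set X :=
  {x | ∀ g ∈ I, g x = 0}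

/-- `B_u(f, I, ε) = {g ∈ C(X) : sup_{x ∈ X} |f x - g x| < ε and f - g ∈ I}`. -/
def uBall {X : Type*} [TopologicalSpace X] (I : Ideal C(X, ℝ)) (f : C(X, ℝ)) (ε : ℝ) :
    Set C(X, ℝ) :=
  {g | (∃ M, M < ε ∧ ∀ x, |f x - g x| ≤ M) ∧ f - g ∈ I}

/-- The `u^I`-topology on `C(X)`, with open base `{B_u(f, I, ε) : f ∈ C(X), ε > 0}`. -/
def uTopology {X : Type*} [TopologicalSpace X] (I : Ideal C(X, ℝ)) :
    TopologicalSpace C(X, ℝ) :=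
  TopologicalSpace.generateFrom {B | ∃ f ε, 0 < ε ∧ B = uBall I f ε}

/-- `B_m(f, I, u) = {g ∈ C(X) : |f x - g x| < u x for all x ∈ X and f - g ∈ I}`. -/
def mBall {X : Type*} [TopologicalSpace X] (I : Ideal C(X, ℝ)) (f u : C(X, ℝ)) :
    Set C(X, ℝ) :=
  {g | (∀ x, |f x - g x| < u x) ∧ f - g ∈ I}

/-- The `m^I`-topology on `C(X)`, with open base
`{B_m(f, I, u) : f ∈ C(X), u ∈ C₊(X)}`. -/
def mTopology {X : Type*} [TopologicalSpace X] (I : Ideal C(X, ℝ)) :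
    TopologicalSpace C(X, ℝ) :=
  TopologicalSpace.generateFrom {B | ∃ f u, (∀ x, 0 < u x) ∧ B = mBall I f u}

/-- A subset `Y` of `X` is bounded if every `f ∈ C(X)` is bounded on `Y`. -/
def BoundedOn {X : Type*} [TopologicalSpace X] (Y : Set X) : Prop :=
  ∀ f : C(X, ℝ), ∃ M : ℝ, ∀ x ∈ Y, |f x| ≤ M

/-- `X` is `I`-pseudocompact if `X ∖ ⋂ Z[I]` is a bounded subset of `X`. -/
def IPseudocompact {X : Type*} [TopologicalSpace X] (I : Ideal C(X, ℝ)) : Prop :=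
  BoundedOn (zInter I)ᶜ

/-- A subset `S` of `X` is pseudocompact (as a subspace) if every continuous
real-valued function on the subspace `S` is bounded. -/
def PseudocompactOn {X : Type*} [TopologicalSpace X] (S : Set X) : Prop :=
  ∀ g : C(S, ℝ), ∃ M : ℝ, ∀ y : S, |g y| ≤ M


section Aux
variable {X : Type*} [TopologicalSpace X] (I : Ideal C(X, ℝ))

lemma mem_uBall_self (f : C(X,ℝ)) {ε : ℝ} (hε : 0 < ε) : f ∈ uBall I f ε :=
  ⟨⟨0, hε, fun x => by simp⟩, by simp⟩

lemma uBall_subset {f h : C(X,ℝ)} {ε : ℝ} (hh : h ∈ uBall I f ε) :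
    ∃ δ > 0, uBall I h δ ⊆ uBall I f ε := by
  obtain ⟨⟨M, hM, hMb⟩, hfh⟩ := hh
  refine ⟨ε - M, by linarith, ?_⟩
  rintro g ⟨⟨N, hN, hNb⟩, hhg⟩
  refine ⟨⟨M + N, by linarith, fun x => ?_⟩, ?_⟩
  · calc |f x - g x| = |(f x - h x) + (h x - g x)| := by ring_nf
      _ ≤ |f x - h x| + |h x - g x| := abs_add_le _ _
      _ ≤ M + N := add_le_add (hMb x) (hNb x)
  · have : f - g = (f - h) + (h - g) := by ring
    rw [this]; exact I.add_mem hfh hhg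

lemma uBall_mono {f : C(X,ℝ)} {δ ε : ℝ} (h : δ ≤ ε) : uBall I f δ ⊆ uBall I f ε := by
  rintro g ⟨⟨M, hM, hMb⟩, hfg⟩
  exact ⟨⟨M, lt_of_lt_of_le hM h, hMb⟩, hfg⟩

lemma uBasis : @IsTopologicalBasis C(X,ℝ) (uTopology I)
    {B | ∃ f ε, 0 < ε ∧ B = uBall I f ε} := by
  letI := uTopology I
  refine ⟨?_, ?_, rfl⟩
  · rintro t₁ ⟨f₁, ε₁, hε₁, rfl⟩ t₂ ⟨f₂, ε₂, hε₂, rfl⟩ x ⟨hx₁, hx₂⟩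
    obtain ⟨δ₁, hδ₁, hs₁⟩ := uBall_subset I hx₁
    obtain ⟨δ₂, hδ₂, hs₂⟩ := uBall_subset I hx₂
    refine ⟨uBall I x (min δ₁ δ₂), ⟨x, min δ₁ δ₂, lt_min hδ₁ hδ₂, rfl⟩,
      mem_uBall_self I x (lt_min hδ₁ hδ₂), ?_⟩
    exact subset_inter ((uBall_mono I (min_le_left _ _)).trans hs₁)
      ((uBall_mono I (min_le_right _ _)).trans hs₂)
  · apply eq_univ_of_forall
    intro f
    exact ⟨uBall I f 1, ⟨f, 1, one_pos, rfl⟩, mem_uBall_self I f one_pos⟩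

lemma exists_small_pos (c : X) (hc : c ∈ (zInter I)ᶜ) {δ : ℝ} (hδ : 0 < δ) :
    ∃ w : C(X,ℝ), w ∈ I ∧ 0 < w c ∧ ∀ x, 0 ≤ w x ∧ w x ≤ δ := by
  simp only [zInter, mem_compl_iff, mem_setOf_eq] at hc
  push_neg at hc
  obtain ⟨k, hkI, hkc⟩ := hc
  have hden : ∀ x : X, (0:ℝ) < 1 + (k x)^2 := fun x => by positivity
  have hcont : Continuous fun x => δ * k x / (1 + (k x)^2) := by
    apply Continuous.div (by continuity) (by continuity)
    exact fun x => (hden x).ne'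
  refine ⟨(⟨_, hcont⟩ : C(X,ℝ)) * k, I.mul_mem_left _ hkI, ?_, fun x => ⟨?_, ?_⟩⟩
  · show 0 < δ * k c / (1 + (k c)^2) * k c
    have : δ * k c / (1 + (k c)^2) * k c = δ * (k c)^2 / (1 + (k c)^2) := by ring
    rw [this]
    positivity
  · show 0 ≤ δ * k x / (1 + (k x)^2) * k x
    have : δ * k x / (1 + (k x)^2) * k x = δ * (k x)^2 / (1 + (k x)^2) := by ring
    rw [this]; positivity
  · show δ * k x / (1 + (k x)^2) * k x ≤ δ
    have h1 : δ * k x / (1 + (k x)^2) * k x = δ * (k x)^2 / (1 + (k x)^2) := by ring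
    rw [h1, div_le_iff₀ (hden x)]
    nlinarith [sq_nonneg (k x)]
end Aux
/-- for `c ∈ X ∖ ⋂ Z[I]`, in `C(X)` with the `u^I`-topology:
(i) `c⁺ = {f : f c > 0}` is open; (ii) `c⁰ = {f : f c ≥ 0}` is closed;
(iii) `c⁰` is not open; (iv) the closure of `c⁺` equals `c⁰`. -/
theorem stmt_19 {X : Type*} [TopologicalSpace X] [T35Space X] (I : Ideal C(X, ℝ))
    (c : X) (hc : c ∈ (zInter I)ᶜ) :
    IsOpen[uTopology I] {f : C(X, ℝ) | 0 < f c} ∧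
    IsClosed[uTopology I] {f : C(X, ℝ) | 0 ≤ f c} ∧
    ¬ IsOpen[uTopology I] {f : C(X, ℝ) | 0 ≤ f c} ∧
    @closure C(X, ℝ) (uTopology I) {f : C(X, ℝ) | 0 < f c} =
      {f : C(X, ℝ) | 0 ≤ f c} := by
  letI := uTopology I
  have hb := uBasis I
  -- (i)
  have hopen : IsOpen {f : C(X, ℝ) | 0 < f c} := by
    rw [hb.isOpen_iff]
    intro f hf
    refine ⟨uBall I f (f c), ⟨f, f c, hf, rfl⟩, mem_uBall_self I f hf, ?_⟩
    rintro g ⟨⟨M, hM, hMb⟩, -⟩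
    have h1 : f c - g c ≤ |f c - g c| := le_abs_self _
    have h2 := hMb c
    simp only [mem_setOf_eq]
    linarith
  -- (ii)
  have hclosed : IsClosed {f : C(X, ℝ) | 0 ≤ f c} := by
    rw [← isOpen_compl_iff]
    have hcompl : {f : C(X, ℝ) | 0 ≤ f c}ᶜ = {f : C(X, ℝ) | f c < 0} := by
      ext f; simp [not_le]
    rw [hcompl, hb.isOpen_iff]
    intro f hf
    simp only [mem_setOf_eq] at hf
    refine ⟨uBall I f (-(f c)), ⟨f, -(f c), by linarith, rfl⟩,
      mem_uBall_self I f (by linarith), ?_⟩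
    rintro g ⟨⟨M, hM, hMb⟩, -⟩
    have h1 : g c - f c ≤ |f c - g c| := by
      rw [abs_sub_comm]; exact le_abs_self _
    have h2 := hMb c
    simp only [mem_setOf_eq]
    linarith
  refine ⟨hopen, hclosed, ?_, ?_⟩
  -- (iii)
  · intro hop
    rw [hb.isOpen_iff] at hop
    obtain ⟨B, ⟨f, ε, hε, rfl⟩, h0B, hBsub⟩ := hop 0 (by simp)
    obtain ⟨⟨M, hM, hMb⟩, hfI⟩ := h0B
    have hfI' : f ∈ I := by simpa using hfI
    have hM0 : 0 ≤ M := le_trans (abs_nonneg _) (by simpa using hMb c)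
    obtain ⟨w, hwI, hwc, hwb⟩ := exists_small_pos I c hc (δ := (ε - M)/2) (by linarith)
    have hmem : -w ∈ uBall I f ε := by
      refine ⟨⟨M + (ε - M)/2, by linarith, fun x => ?_⟩, ?_⟩
      · have h1 := hMb x
        have h2 := (hwb x).1
        have h3 := (hwb x).2
        simp only [ContinuousMap.neg_apply, ContinuousMap.zero_apply, sub_zero,
          sub_neg_eq_add] at h1 ⊢
        rw [abs_le] at h1 ⊢
        exact ⟨by linarith [h1.1], by linarith [h1.2]⟩
      · have : f - -w = f + w := by ring
        rw [this]; exact I.add_mem hfI' hwI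
    have := hBsub hmem
    simp only [mem_setOf_eq, ContinuousMap.neg_apply] at this
    linarith
  -- (iv)
  · apply subset_antisymm
    · exact closure_minimal (fun f (hf : 0 < f c) => le_of_lt hf) hclosed
    · intro f hf
      rw [hb.mem_closure_iff]
      rintro B ⟨g, ε, hε, rfl⟩ hfB
      obtain ⟨⟨M, hM, hMb⟩, hgf⟩ := hfB
      have hM0 : 0 ≤ M := le_trans (abs_nonneg _) (hMb c)
      obtain ⟨w, hwI, hwc, hwb⟩ := exists_small_pos I c hc (δ := (ε - M)/2) (by linarith)
      refine ⟨f + w, ⟨⟨M + (ε - M)/2, by linarith, fun x => ?_⟩, ?_⟩, ?_⟩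
      · have h1 := hMb x
        have h2 := (hwb x).1
        have h3 := (hwb x).2
        simp only [ContinuousMap.add_apply]
        rw [abs_le] at h1 ⊢
        exact ⟨by linarith [h1.1], by linarith [h1.2]⟩
      · have : g - (f + w) = (g - f) - w := by ring
        rw [this]; exact I.sub_mem hgf hwI
      · simp only [mem_setOf_eq, ContinuousMap.add_apply]
        have : 0 ≤ f c := hf
        linarith
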